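/- Entropy bound on lagged causally conditioned directed information: For any random variables (x_t, i_t, w_t), t = 1, ..., T, taking values in finite sets, H[(i_1,...,i_T)] ≥ Σ_{t=1}^T I[x^t; i_t | (i^{t-1}, w^{t-1})], i.e., the joint entropy of i^T is at least the lagged causally conditioned directed information I(x^T → i^T ‖ w^{T-1}). -/

import Mathlib

open MeasureTheory ProbabilityTheory Finset

/-- Shannon entropy (base 2) of a random variable with values in a finite type. -/
noncomputable def shEnt {Ω : Type*} [MeasurableSpace Ω] {S : Type*} [Fintype S]
    (μ : Measure Ω) (X : Ω → S) : ℝ :=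
  -∑ s : S, ((μ (X ⁻¹' {s})).toReal * Real.logb 2 (μ (X ⁻¹' {s})).toReal)

/-- Mutual information (base 2). -/
noncomputable def mutInf {Ω : Type*} [MeasurableSpace Ω] {S T : Type*} [Fintype S] [Fintype T]
    (μ : Measure Ω) (X : Ω → S) (Y : Ω → T) : ℝ :=
  shEnt μ X + shEnt μ Y - shEnt μ (fun ω => (X ω, Y ω))

/-- Conditional mutual information (base 2), `I[X ; Y | Z]`. -/
noncomputable def condMutInf {Ω : Type*} [MeasurableSpace Ω] {S T U : Type*}
    [Fintype S] [Fintype T] [Fintype U]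
    (μ : Measure Ω) (X : Ω → S) (Y : Ω → T) (Z : Ω → U) : ℝ :=
  shEnt μ (fun ω => (X ω, Z ω)) + shEnt μ (fun ω => (Y ω, Z ω))
    - shEnt μ (fun ω => (X ω, Y ω, Z ω)) - shEnt μ Z

/-- The history `a^t = (a_1, …, a_t)` of a process (0-indexed: the first `t` variables). -/
def hist {Ω : Type*} {α : ℕ → Type*} (x : (i : ℕ) → Ω → α i) (t : ℕ) :
    Ω → ((i : Fin t) → α i) :=
  fun ω i => x i ω




lemma tri_comm {A B C : Type*} [Fintype A] [Fintype B] [Fintype C] (f : A → B → C → ℝ) :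
    ∑ a, ∑ b, ∑ c, f a b c = ∑ c, ∑ a, ∑ b, f a b c := by
  have h1 : ∀ a : A, ∑ b, ∑ c, f a b c = ∑ c, ∑ b, f a b c := fun a => Finset.sum_comm
  simp_rw [h1]
  exact Finset.sum_comm


lemma mono_real {A B : Type*} [Fintype A] [Fintype B] (p : A → B → ℝ)
    (hp : ∀ a b, 0 ≤ p a b) :
    ∑ a, ∑ b, p a b * Real.logb 2 (p a b)
      ≤ ∑ a, (∑ b, p a b) * Real.logb 2 (∑ b, p a b) := by
  refine Finset.sum_le_sum fun a _ => ?_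
  rw [Finset.sum_mul]
  refine Finset.sum_le_sum fun b _ => ?_
  rcases eq_or_lt_of_le (hp a b) with h | h
  · simp [← h]
  · exact mul_le_mul_of_nonneg_left
      (Real.logb_le_logb_of_le one_lt_two h
        (Finset.single_le_sum (fun b' _ => hp a b') (mem_univ b))) (hp a b)

lemma ssa_real {A B C : Type*} [Fintype A] [Fintype B] [Fintype C] (p : A → B → C → ℝ)
    (hp : ∀ a b c, 0 ≤ p a b c) :
    (∑ a, ∑ c, (∑ b, p a b c) * Real.logb 2 (∑ b, p a b c))
      + ∑ b, ∑ c, (∑ a, p a b c) * Real.logb 2 (∑ a, p a b c)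
    ≤ (∑ a, ∑ b, ∑ c, p a b c * Real.logb 2 (p a b c))
      + ∑ c, (∑ a, ∑ b, p a b c) * Real.logb 2 (∑ a, ∑ b, p a b c) := by
  classical
  set L := fun a c => ∑ b, p a b c with hL
  set M := fun b c => ∑ a, p a b c with hM
  set N := fun c => ∑ a, L a c with hN
  have hL0 : ∀ a c, 0 ≤ L a c := fun a c => Finset.sum_nonneg fun b _ => hp a b c
  have hM0 : ∀ b c, 0 ≤ M b c := fun b c => Finset.sum_nonneg fun a _ => hp a b c
  have hN0 : ∀ c, 0 ≤ N c := fun c => Finset.sum_nonneg fun a _ => hL0 a c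
  have hpL : ∀ a b c, p a b c ≤ L a c := fun a b c =>
    Finset.single_le_sum (fun b' _ => hp a b' c) (mem_univ b)
  have hpM : ∀ a b c, p a b c ≤ M b c := fun a b c =>
    Finset.single_le_sum (fun a' _ => hp a' b c) (mem_univ a)
  have hLN : ∀ a c, L a c ≤ N c := fun a c =>
    Finset.single_le_sum (fun a' _ => hL0 a' c) (mem_univ a)
  have hNM : ∀ c, N c = ∑ b, M b c := fun c => Finset.sum_comm
  have hlog2 : (0:ℝ) < Real.log 2 := Real.log_pos one_lt_two
  -- rewrite the marginal-entropy sums as triple sums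
  have e1 : ∑ a, ∑ c, L a c * Real.logb 2 (L a c)
      = ∑ a, ∑ b, ∑ c, p a b c * Real.logb 2 (L a c) := by
    refine Finset.sum_congr rfl fun a _ => ?_
    rw [Finset.sum_comm]
    refine Finset.sum_congr rfl fun c _ => ?_
    rw [hL, Finset.sum_mul]
  have e2 : ∑ b, ∑ c, M b c * Real.logb 2 (M b c)
      = ∑ a, ∑ b, ∑ c, p a b c * Real.logb 2 (M b c) := by
    rw [tri_comm (fun a b c => p a b c * Real.logb 2 (M b c)), Finset.sum_comm]
    refine Finset.sum_congr rfl fun b _ => ?_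
    rw [Finset.sum_comm]
    refine Finset.sum_congr rfl fun c _ => ?_
    rw [hM, Finset.sum_mul]
  have e3 : ∑ c, N c * Real.logb 2 (N c)
      = ∑ a, ∑ b, ∑ c, p a b c * Real.logb 2 (N c) := by
    rw [tri_comm (fun a b c => p a b c * Real.logb 2 (N c))]
    refine Finset.sum_congr rfl fun c _ => ?_
    rw [hN, Finset.sum_mul]
    refine Finset.sum_congr rfl fun a _ => ?_
    rw [hL, Finset.sum_mul]
  rw [e1, e2, e3]
  set v := fun (a : A) (b : B) (c : C) =>
    (if 0 < N c then L a c * M b c / N c else 0) / Real.log 2 with hv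
  have hv0 : ∀ a b c, 0 ≤ v a b c := by
    intro a b c
    rw [hv]
    apply div_nonneg _ (le_of_lt hlog2)
    split
    · exact div_nonneg (mul_nonneg (hL0 a c) (hM0 b c)) (hN0 c)
    · exact le_rfl
  -- termwise bound
  have key : ∀ a b c, p a b c * Real.logb 2 (L a c) + p a b c * Real.logb 2 (M b c)
      ≤ p a b c * Real.logb 2 (p a b c) + p a b c * Real.logb 2 (N c)
        + (v a b c - p a b c / Real.log 2) := by
    intro a b c
    rcases eq_or_lt_of_le (hp a b c) with h0 | h0
    · simp only [← h0, zero_mul, zero_div]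
      have := hv0 a b c
      linarith
    · have hLpos : 0 < L a c := lt_of_lt_of_le h0 (hpL a b c)
      have hMpos : 0 < M b c := lt_of_lt_of_le h0 (hpM a b c)
      have hNpos : 0 < N c := lt_of_lt_of_le hLpos (hLN a c)
      have hvval : v a b c = L a c * M b c / N c / Real.log 2 := by
        rw [hv]; simp [hNpos]
      have hgibbs : Real.log (L a c * M b c / (p a b c * N c))
          ≤ L a c * M b c / (p a b c * N c) - 1 :=
        Real.log_le_sub_one_of_pos (by positivity)
      have hexpand2 : p a b c * Real.log (L a c * M b c / (p a b c * N c))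
          = p a b c * Real.log (L a c) + p a b c * Real.log (M b c)
            - p a b c * Real.log (p a b c) - p a b c * Real.log (N c) := by
        rw [Real.log_div (by positivity) (by positivity),
            Real.log_mul (ne_of_gt hLpos) (ne_of_gt hMpos),
            Real.log_mul (ne_of_gt h0) (ne_of_gt hNpos)]
        ring
      have h1 := mul_le_mul_of_nonneg_left hgibbs (le_of_lt h0)
      rw [hexpand2] at h1
      have h2 : p a b c * (L a c * M b c / (p a b c * N c) - 1)
          = L a c * M b c / N c - p a b c := by
        field_simp
      rw [h2] at h1
      calc p a b c * Real.logb 2 (L a c) + p a b c * Real.logb 2 (M b c)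
          = (p a b c * Real.log (L a c) + p a b c * Real.log (M b c)) / Real.log 2 := by
            simp only [Real.logb]; ring
        _ ≤ (p a b c * Real.log (p a b c) + p a b c * Real.log (N c)
              + (L a c * M b c / N c - p a b c)) / Real.log 2 := by
            apply div_le_div_of_nonneg_right ?_ (le_of_lt hlog2)
            linarith
        _ = p a b c * Real.logb 2 (p a b c) + p a b c * Real.logb 2 (N c)
              + (v a b c - p a b c / Real.log 2) := by
            rw [hvval]; simp only [Real.logb]; ring
  -- sum of the correction term is ≤ 0
  have hv_c : ∀ c, ∑ a, ∑ b, v a b c = if 0 < N c then N c / Real.log 2 else 0 := by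
    intro c
    by_cases h : 0 < N c
    · simp only [hv, if_pos h, div_div]
      have hinner : ∀ a, ∑ b, L a c * M b c / (N c * Real.log 2)
          = L a c * N c / (N c * Real.log 2) := by
        intro a
        rw [← Finset.sum_div, ← Finset.mul_sum, ← hNM c]
      simp_rw [hinner]
      rw [← Finset.sum_div, ← Finset.sum_mul]
      rw [show ∑ a, L a c = N c from rfl]
      field_simp
    · simp [hv, if_neg h]
  have hcorr : ∑ a, ∑ b, ∑ c, (v a b c - p a b c / Real.log 2) ≤ 0 := by
    have hre : ∑ a, ∑ b, ∑ c, (v a b c - p a b c / Real.log 2)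
        = ∑ c, (∑ a, ∑ b, v a b c) - ∑ c, (∑ a, ∑ b, p a b c / Real.log 2) := by
      rw [tri_comm (fun a b c => v a b c - p a b c / Real.log 2)]
      rw [← Finset.sum_sub_distrib]
      refine Finset.sum_congr rfl fun c _ => ?_
      rw [← Finset.sum_sub_distrib]
      refine Finset.sum_congr rfl fun a _ => ?_
      rw [← Finset.sum_sub_distrib]
    rw [hre]
    have h1 : ∑ c, (∑ a, ∑ b, p a b c / Real.log 2) = ∑ c, N c / Real.log 2 := by
      refine Finset.sum_congr rfl fun c _ => ?_
      simp_rw [← Finset.sum_div]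
      rfl
    rw [h1]
    simp_rw [hv_c]
    have hle : ∑ c, (if 0 < N c then N c / Real.log 2 else 0) ≤ ∑ c, N c / Real.log 2 := by
      refine Finset.sum_le_sum fun c _ => ?_
      split
      · exact le_rfl
      · exact div_nonneg (hN0 c) (le_of_lt hlog2)
    linarith
  have hstep : ∑ a, ∑ b, ∑ c, (p a b c * Real.logb 2 (L a c) + p a b c * Real.logb 2 (M b c))
      ≤ ∑ a, ∑ b, ∑ c, (p a b c * Real.logb 2 (p a b c) + p a b c * Real.logb 2 (N c)
          + (v a b c - p a b c / Real.log 2)) :=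
    Finset.sum_le_sum fun a _ => Finset.sum_le_sum fun b _ =>
      Finset.sum_le_sum fun c _ => key a b c
  simp only [Finset.sum_add_distrib] at hstep
  linarith

open MeasureTheory ProbabilityTheory Finset


section Aux

variable {Ω : Type*} [MeasurableSpace Ω] (μ : Measure Ω) [IsProbabilityMeasure μ]

lemma toReal_meas_iUnion
    {S : Type*} [MeasurableSpace S] [MeasurableSingletonClass S]
    {B : Type*} [Fintype B] (P : Ω → S) (hP : Measurable P) (f : B → S)
    (hf : Function.Injective f)
    {A : Set Ω} (hA : A = ⋃ b, P ⁻¹' {f b}) :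
    (μ A).toReal = ∑ b, (μ (P ⁻¹' {f b})).toReal := by
  subst hA
  rw [measure_iUnion
      (fun b b' hbb' => (Set.disjoint_singleton.2 (hf.ne hbb')).preimage P)
      (fun b => hP (measurableSet_singleton _))]
  rw [tsum_fintype, ENNReal.toReal_sum (fun b _ => measure_ne_top μ _)]

lemma shEnt_nonneg {S : Type*} [Fintype S] (X : Ω → S) : 0 ≤ shEnt μ X := by
  rw [shEnt, neg_nonneg]
  refine Finset.sum_nonpos fun s _ => ?_
  refine mul_nonpos_of_nonneg_of_nonpos ENNReal.toReal_nonneg ?_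
  refine Real.logb_nonpos one_lt_two ENNReal.toReal_nonneg ?_
  have h := ENNReal.toReal_mono ENNReal.one_ne_top (prob_le_one (μ := μ) (s := X ⁻¹' {s}))
  simpa using h

lemma shEnt_comp_eq {S S' : Type*} [Fintype S] [Fintype S'] (P : Ω → S) (g : S → S')
    (hg : Function.Injective g) :
    shEnt μ (fun ω => g (P ω)) = shEnt μ P := by
  classical
  rw [shEnt, shEnt, neg_inj]
  rw [← Finset.sum_subset (Finset.subset_univ (Finset.univ.image g))
      (fun s' _ hs' => ?_)]
  · rw [Finset.sum_image (fun a _ b _ h => hg h)]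
    refine Finset.sum_congr rfl fun s _ => ?_
    have : (fun ω => g (P ω)) ⁻¹' {g s} = P ⁻¹' {s} := by
      ext ω
      simp only [Set.mem_preimage, Set.mem_singleton_iff]
      exact ⟨fun h => hg h, fun h => by rw [h]⟩
    rw [this]
  · have : (fun ω => g (P ω)) ⁻¹' {s'} = ∅ := by
      ext ω
      simp only [Set.mem_preimage, Set.mem_singleton_iff, Set.mem_empty_iff_false, iff_false]
      intro h
      exact hs' (Finset.mem_image.2 ⟨P ω, Finset.mem_univ _, h⟩)
    rw [this]
    simp

lemma shEnt_fst_le {A B : Type*} [Fintype A] [Fintype B]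
    [MeasurableSpace A] [MeasurableSpace B]
    [MeasurableSingletonClass A] [MeasurableSingletonClass B]
    (P : Ω → A × B) (hP : Measurable P) :
    shEnt μ (fun ω => (P ω).1) ≤ shEnt μ P := by
  classical
  have hmarg : ∀ a : A, (μ ((fun ω => (P ω).1) ⁻¹' {a})).toReal
      = ∑ b : B, (μ (P ⁻¹' {(a, b)})).toReal := by
    intro a
    refine toReal_meas_iUnion μ P hP (fun b => (a, b))
      (fun b b' h => by simpa using congrArg Prod.snd h) ?_
    ext ω
    simp only [Set.mem_preimage, Set.mem_singleton_iff, Set.mem_iUnion, Prod.ext_iff]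
    exact ⟨fun h => ⟨(P ω).2, h, rfl⟩, fun ⟨b, h1, _⟩ => h1⟩
  rw [shEnt, shEnt, neg_le_neg_iff, Fintype.sum_prod_type]
  simp_rw [hmarg]
  exact mono_real (fun a b => (μ (P ⁻¹' {(a, b)})).toReal)
    (fun a b => ENNReal.toReal_nonneg)

lemma ssa_meas {A B C : Type*} [Fintype A] [Fintype B] [Fintype C]
    [MeasurableSpace A] [MeasurableSpace B] [MeasurableSpace C]
    [MeasurableSingletonClass A] [MeasurableSingletonClass B] [MeasurableSingletonClass C]
    (X : Ω → A) (Y : Ω → B) (Z : Ω → C)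
    (hX : Measurable X) (hY : Measurable Y) (hZ : Measurable Z) :
    shEnt μ (fun ω => (X ω, Y ω, Z ω)) + shEnt μ Z
      ≤ shEnt μ (fun ω => (X ω, Z ω)) + shEnt μ (fun ω => (Y ω, Z ω)) := by
  classical
  set P : Ω → A × B × C := fun ω => (X ω, Y ω, Z ω) with hPdef
  have hP : Measurable P := hX.prodMk (hY.prodMk hZ)
  set p : A → B → C → ℝ := fun a b c => (μ (P ⁻¹' {(a, b, c)})).toReal with hpdef
  have hps : ∀ a b c, 0 ≤ p a b c := fun _ _ _ => ENNReal.toReal_nonneg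
  have m1 : ∀ a c, (μ ((fun ω => (X ω, Z ω)) ⁻¹' {(a, c)})).toReal = ∑ b, p a b c := by
    intro a c
    refine toReal_meas_iUnion μ P hP (fun b => (a, b, c))
      (fun b b' h => by simpa using congrArg (fun q => q.2.1) h) ?_
    ext ω
    simp only [Set.mem_preimage, Set.mem_singleton_iff, Set.mem_iUnion, Prod.ext_iff, hPdef]
    exact ⟨fun ⟨h1, h2⟩ => ⟨Y ω, h1, rfl, h2⟩, fun ⟨b, h1, _, h3⟩ => ⟨h1, h3⟩⟩
  have m2 : ∀ b c, (μ ((fun ω => (Y ω, Z ω)) ⁻¹' {(b, c)})).toReal = ∑ a, p a b c := by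
    intro b c
    refine toReal_meas_iUnion μ P hP (fun a => (a, b, c))
      (fun a a' h => by simpa using congrArg (fun q => q.1) h) ?_
    ext ω
    simp only [Set.mem_preimage, Set.mem_singleton_iff, Set.mem_iUnion, Prod.ext_iff, hPdef]
    exact ⟨fun ⟨h1, h2⟩ => ⟨X ω, rfl, h1, h2⟩, fun ⟨a, _, h2, h3⟩ => ⟨h2, h3⟩⟩
  have m3 : ∀ c, (μ (Z ⁻¹' {c})).toReal = ∑ q : A × B, p q.1 q.2 c := by
    intro c
    refine toReal_meas_iUnion μ P hP (fun q : A × B => (q.1, q.2, c))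
      (fun q q' h => Prod.ext (by simpa using congrArg (fun r => r.1) h)
        (by simpa using congrArg (fun r => r.2.1) h)) ?_
    ext ω
    simp only [Set.mem_preimage, Set.mem_singleton_iff, Set.mem_iUnion, Prod.ext_iff, hPdef]
    exact ⟨fun h => ⟨(X ω, Y ω), rfl, rfl, h⟩, fun ⟨q, _, _, h3⟩ => h3⟩
  have e0 : shEnt μ P = -∑ a, ∑ b, ∑ c, p a b c * Real.logb 2 (p a b c) := by
    rw [shEnt, Fintype.sum_prod_type]
    congr 1
    refine Finset.sum_congr rfl fun a _ => ?_
    rw [Fintype.sum_prod_type]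
  have e1 : shEnt μ (fun ω => (X ω, Z ω))
      = -∑ a, ∑ c, (∑ b, p a b c) * Real.logb 2 (∑ b, p a b c) := by
    rw [shEnt, Fintype.sum_prod_type]
    congr 1
    refine Finset.sum_congr rfl fun a _ => Finset.sum_congr rfl fun c _ => ?_
    rw [m1 a c]
  have e2 : shEnt μ (fun ω => (Y ω, Z ω))
      = -∑ b, ∑ c, (∑ a, p a b c) * Real.logb 2 (∑ a, p a b c) := by
    rw [shEnt, Fintype.sum_prod_type]
    congr 1
    refine Finset.sum_congr rfl fun b _ => Finset.sum_congr rfl fun c _ => ?_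
    rw [m2 b c]
  have e3 : shEnt μ Z = -∑ c, (∑ a, ∑ b, p a b c) * Real.logb 2 (∑ a, ∑ b, p a b c) := by
    rw [shEnt]
    congr 1
    refine Finset.sum_congr rfl fun c _ => ?_
    rw [m3 c]
    simp [Fintype.sum_prod_type]
  rw [e0, e1, e2, e3]
  have := ssa_real p hps
  linarith

end Aux

section Main2
variable {Ω : Type*} [MeasurableSpace Ω] (μ : Measure Ω) [IsProbabilityMeasure μ]

set_option maxHeartbeats 1000000 in
lemma shEnt_hist_succ {β : ℕ → Type*} [∀ t, Fintype (β t)] (i : (t : ℕ) → Ω → β t) (t : ℕ) :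
    shEnt μ (fun ω => (i t ω, hist i t ω)) = shEnt μ (hist i (t + 1)) := by
  have hg : Function.Injective (fun h : (j : Fin (t + 1)) → β j =>
      ((h (Fin.last t), fun j : Fin t => h j.castSucc) : β t × ((j : Fin t) → β j))) := by
    intro h1 h2 heq
    have h1e := congrArg Prod.fst heq
    have h2e := congrArg Prod.snd heq
    funext j
    refine Fin.lastCases ?_ ?_ j
    · exact h1e
    · intro j'
      exact congrFun h2e j'
  have key := shEnt_comp_eq μ (hist i (t + 1)) _ hg
  have hfun : (fun ω => (i t ω, hist i t ω))
      = (fun ω => ((hist i (t + 1) ω) (Fin.last t),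
          fun j : Fin t => (hist i (t + 1) ω) j.castSucc)) := rfl
  rw [hfun]
  exact key

end Main2
set_option maxHeartbeats 2000000 in
/-- The joint entropy of `i^T` is at least the lagged causally conditioned directed information
`I(x^T → i^T ‖ w^{T-1}) = Σ_t I[x^t ; i_t | (i^{t-1}, w^{t-1})]`. -/
theorem entropy_ge_lagged_causally_conditioned_directedInfo
    {Ω : Type*} [MeasurableSpace Ω] (μ : Measure Ω) [IsProbabilityMeasure μ]
    (T : ℕ) {α β γ : ℕ → Type*}
    [∀ t, Fintype (α t)] [∀ t, Fintype (β t)] [∀ t, Fintype (γ t)]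
    [∀ t, MeasurableSpace (α t)] [∀ t, MeasurableSpace (β t)] [∀ t, MeasurableSpace (γ t)]
    [∀ t, MeasurableSingletonClass (α t)] [∀ t, MeasurableSingletonClass (β t)]
    [∀ t, MeasurableSingletonClass (γ t)]
    (x : (t : ℕ) → Ω → α t) (i : (t : ℕ) → Ω → β t) (w : (t : ℕ) → Ω → γ t)
    (hx : ∀ t, Measurable (x t)) (hi : ∀ t, Measurable (i t)) (hw : ∀ t, Measurable (w t)) :
    shEnt μ (hist i T)
      ≥ ∑ t ∈ range T,
          condMutInf μ (hist x (t + 1)) (i t) (fun ω => (hist i t ω, hist w t ω)) := by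
  have hhi : ∀ s, Measurable (hist i s) := fun s => measurable_pi_lambda _ fun j => hi j
  have hhw : ∀ s, Measurable (hist w s) := fun s => measurable_pi_lambda _ fun j => hw j
  have hhx : ∀ s, Measurable (hist x s) := fun s => measurable_pi_lambda _ fun j => hx j
  have step : ∀ t, condMutInf μ (hist x (t + 1)) (i t)
      (fun ω => (hist i t ω, hist w t ω)) ≤ shEnt μ (hist i (t + 1)) - shEnt μ (hist i t) := by
    intro t
    have h1 : shEnt μ (fun ω => (hist x (t + 1) ω, (hist i t ω, hist w t ω)))
        ≤ shEnt μ (fun ω => (hist x (t + 1) ω, (i t ω, (hist i t ω, hist w t ω)))) := by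
      calc shEnt μ (fun ω => (hist x (t + 1) ω, (hist i t ω, hist w t ω)))
          ≤ shEnt μ (fun ω => ((hist x (t + 1) ω, (hist i t ω, hist w t ω)), i t ω)) :=
            shEnt_fst_le μ
              (fun ω => ((hist x (t + 1) ω, (hist i t ω, hist w t ω)), i t ω))
              (((hhx (t + 1)).prodMk ((hhi t).prodMk (hhw t))).prodMk (hi t))
        _ = _ := shEnt_comp_eq μ
            (fun ω => (hist x (t + 1) ω, (i t ω, (hist i t ω, hist w t ω))))
            (fun q => ((q.1, q.2.2), q.2.1))
            (by intro q q' h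
                simp only [Prod.ext_iff] at h ⊢
                exact ⟨h.1.1, h.2, h.1.2⟩)
    have h2 := ssa_meas μ (i t) (hist w t) (hist i t) (hi t) (hhw t) (hhi t)
    have r1 : shEnt μ (fun ω => (i t ω, (hist w t ω, hist i t ω)))
        = shEnt μ (fun ω => (i t ω, (hist i t ω, hist w t ω))) :=
      shEnt_comp_eq μ (fun ω => (i t ω, (hist i t ω, hist w t ω)))
        (fun q => (q.1, (q.2.2, q.2.1)))
        (by intro q q' h
            simp only [Prod.ext_iff] at h ⊢
            exact ⟨h.1, h.2.2, h.2.1⟩)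
    have r2 : shEnt μ (fun ω => (hist w t ω, hist i t ω))
        = shEnt μ (fun ω => (hist i t ω, hist w t ω)) :=
      shEnt_comp_eq μ (fun ω => (hist i t ω, hist w t ω)) (fun q => (q.2, q.1))
        (by intro q q' h
            simp only [Prod.ext_iff] at h ⊢
            exact ⟨h.2, h.1⟩)
    have r3 : shEnt μ (fun ω => (i t ω, hist i t ω)) = shEnt μ (hist i (t + 1)) :=
      shEnt_hist_succ μ i t
    simp only [condMutInf]
    linarith [h1, h2, r1, r2, r3]
  induction T with
  | zero => simpa using shEnt_nonneg μ (hist i 0)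
  | succ T ih =>
    rw [Finset.sum_range_succ]
    have h1 := step T
    linarith [ih]
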